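/- Let G be a finite simple graph that is not complete, and let H be a finite simple graph with at least two vertices in which every vertex has degree at least 2 (no pendant or isolated vertices). Then the tensor product G × H admits a barbell partition. -/

import Mathlib

open SimpleGraph

/-- A barbell partition of a graph `G`: a partition of the vertex set into
`R`, `W1`, `W2` with `W1, W2` nonempty, no edges between `W1` and `W2`, and
every vertex of `R` has a number of neighbors in each `Wi` different from 1. -/
def IsBarbellPartition {V : Type*} (G : SimpleGraph V) (R W1 W2 : Set V) : Prop :=
  R ∪ W1 ∪ W2 = Set.univ ∧ Disjoint R W1 ∧ Disjoint R W2 ∧ Disjoint W1 W2 ∧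
  W1.Nonempty ∧ W2.Nonempty ∧
  (∀ w1 ∈ W1, ∀ w2 ∈ W2, ¬ G.Adj w1 w2) ∧
  (∀ v ∈ R, (G.neighborSet v ∩ W1).ncard ≠ 1 ∧ (G.neighborSet v ∩ W2).ncard ≠ 1)

/-- `G` admits a barbell partition. -/
def HasBarbellPartition {V : Type*} (G : SimpleGraph V) : Prop :=
  ∃ R W1 W2 : Set V, IsBarbellPartition G R W1 W2

/-- A fort of `G`: a nonempty vertex set `F` such that no vertex outside `F`
has exactly one neighbor in `F`. -/
def IsFort {V : Type*} (G : SimpleGraph V) (F : Set V) : Prop :=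
  F.Nonempty ∧ ∀ v ∉ F, (G.neighborSet v ∩ F).ncard ≠ 1

/-- The tensor (categorical) product of two graphs. -/
def tensorProd {α β : Type*} (G : SimpleGraph α) (H : SimpleGraph β) :
    SimpleGraph (α × β) where
  Adj x y := G.Adj x.1 y.1 ∧ H.Adj x.2 y.2
  symm := ⟨fun _ _ h => ⟨h.1.symm, h.2.symm⟩⟩
  loopless := ⟨fun x h => G.loopless.irrefl x.1 h.1⟩

open scoped Classical in
lemma fiber_ncard {α β : Type*} [Fintype β] (G : SimpleGraph α) (H : SimpleGraph β)
    (a : α) (b : β) (u : α) :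
    ((tensorProd G H).neighborSet (a, b) ∩ {p : α × β | p.1 = u}).ncard
      = if G.Adj a u then (H.neighborSet b).ncard else 0 := by
  classical
  by_cases h : G.Adj a u
  · rw [if_pos h]
    have hset : (tensorProd G H).neighborSet (a, b) ∩ {p : α × β | p.1 = u}
        = (fun b' => (u, b')) '' (H.neighborSet b) := by
      ext ⟨x, y⟩
      simp only [Set.mem_inter_iff, Set.mem_image, Set.mem_setOf_eq, mem_neighborSet,
        tensorProd, Prod.mk.injEq]
      constructor
      · rintro ⟨⟨_, hy⟩, rfl⟩; exact ⟨y, hy, rfl, rfl⟩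
      · rintro ⟨y', hy', rfl, rfl⟩; exact ⟨⟨h, hy'⟩, rfl⟩
    rw [hset, Set.ncard_image_of_injective _ (fun x y hxy => (Prod.mk.injEq _ _ _ _ ▸ hxy).2)]
  · rw [if_neg h]
    convert Set.ncard_empty (α × β)
    ext ⟨x, y⟩
    simp only [Set.mem_inter_iff, Set.mem_setOf_eq, mem_neighborSet, tensorProd,
      Set.mem_empty_iff_false, iff_false]
    rintro ⟨⟨hx, _⟩, rfl⟩; exact h hx

/-- If `G` is not complete and `H` has at least two vertices, all of degree at
least 2, then the tensor product `G × H` admits a barbell partition. -/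
theorem tensorProd_hasBarbellPartition {α β : Type*} [Fintype α] [Fintype β]
    (G : SimpleGraph α) (H : SimpleGraph β)
    (hnc : ¬ ∀ u v : α, u ≠ v → G.Adj u v)
    (hβ : 2 ≤ Fintype.card β)
    (hdeg : ∀ b : β, 2 ≤ (H.neighborSet b).ncard) :
    HasBarbellPartition (tensorProd G H) := by
  push_neg at hnc
  obtain ⟨u, v, huv, hadj⟩ := hnc
  obtain ⟨b0⟩ : Nonempty β := Fintype.card_pos_iff.mp (by omega)
  refine ⟨{p | p.1 ≠ u ∧ p.1 ≠ v}, {p | p.1 = u}, {p | p.1 = v}, ?_, ?_, ?_, ?_,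
    ⟨(u, b0), rfl⟩, ⟨(v, b0), rfl⟩, ?_, ?_⟩
  · ext p; by_cases h1 : p.1 = u <;> by_cases h2 : p.1 = v <;> simp [h1, h2]
  · rw [Set.disjoint_left]; rintro p ⟨h, _⟩ hp; exact h hp
  · rw [Set.disjoint_left]; rintro p ⟨_, h⟩ hp; exact h hp
  · rw [Set.disjoint_left]; rintro p h1 h2; exact huv (h1 ▸ h2 ▸ rfl)
  · rintro ⟨x1, y1⟩ h1 ⟨x2, y2⟩ h2 ⟨ha, _⟩
    simp only [Set.mem_setOf_eq] at h1 h2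
    subst h1; subst h2; exact hadj ha
  · rintro ⟨a, b⟩ ⟨ha1, ha2⟩
    constructor
    · rw [fiber_ncard]
      split
      · have := hdeg b; omega
      · omega
    · rw [fiber_ncard]
      split
      · have := hdeg b; omega
      · omega
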